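/- Let d ≥ 1 and n ≥ 2 be integers and let Γ = {(x₁, …, x_d) ∈ ℤ^d : xᵢ ≥ 0 for all i, and x₁ + ⋯ + x_d ≤ n − 1} ⊆ ℝ^d be the equally spaced half-grid. Then for every positive integer k, the minimum size of a finite multiset of affine hyperplanes in ℝ^d, none of which contains the origin, such that every point of Γ ∖ {0} lies on at least k of the hyperplanes (counted with multiplicity), is exactly (n − 1)·k. -/
import Mathlib

open scoped Classical

/-- `IsOnHyperplane P p` means the point `p : Fin d → ℝ` lies on the affine hyperplane
with coefficients `P = (u, c)`, i.e. on `{x | u ⬝ x = c}`. -/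
def IsOnHyperplane {d : ℕ} (P : (Fin d → ℝ) × ℝ) (p : Fin d → ℝ) : Prop :=
  ∑ i, P.1 i * p i = P.2

lemma sum_countP_le {α : Type*} (M : Multiset α) (S : Finset ℕ) (p : ℕ → α → Prop)
    : (∀ a ∈ M, ∀ t ∈ S, ∀ t' ∈ S, p t a → p t' a → t = t') →
    ∑ t ∈ S, M.countP (fun a => p t a) ≤ Multiset.card M := by
  induction M using Multiset.induction_on with
  | empty => intro h; simp
  | cons a M ih =>
    intro h
    have ih := ih (fun b hb => h b (Multiset.mem_cons_of_mem hb))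
    have h := h a (Multiset.mem_cons_self a M)
    simp only [Multiset.countP_cons, Multiset.card_cons, Finset.sum_add_distrib]
    have h1 : ∑ t ∈ S, (if p t a then 1 else 0) ≤ 1 := by
      rw [Finset.sum_ite, Finset.sum_const, Finset.sum_const]
      simp only [smul_eq_mul, mul_one, mul_zero, add_zero]
      exact Finset.card_le_one.2 (fun t ht t' ht' =>
        h t (Finset.mem_filter.1 ht).1 t' (Finset.mem_filter.1 ht').1
          (Finset.mem_filter.1 ht).2 (Finset.mem_filter.1 ht').2)
    omega

theorem stmt_11 (d n : ℕ) (hd : 1 ≤ d) (hn : 2 ≤ n) (k : ℕ) (hk : 0 < k) :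
    -- (n-1)·k is the minimum size of a multiset of affine hyperplanes, none containing
    -- the origin, covering every point of the equally spaced half-grid Γ ∖ {0}
    -- at least k times with multiplicity
    IsLeast {N : ℕ | ∃ M : Multiset ((Fin d → ℝ) × ℝ),
      (∀ P ∈ M, P.1 ≠ 0 ∧ P.2 ≠ 0) ∧
      (∀ x : Fin d → ℕ, (∑ i, x i) ≤ n - 1 → x ≠ 0 →
        k ≤ M.countP (fun P => IsOnHyperplane P (fun i => (x i : ℝ)))) ∧
      Multiset.card M = N} ((n - 1) * k) := by
  constructor
  · -- membership: k copies of hyperplanes x₁+⋯+x_d = j, j = 1,…,n-1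
    refine ⟨k • ((Finset.Icc 1 (n-1)).val.map
      (fun j : ℕ => ((fun _ => (1:ℝ)), (j:ℝ)))), ?_, ?_, ?_⟩
    · intro P hP
      rw [Multiset.mem_nsmul] at hP
      obtain ⟨j, hj, rfl⟩ := Multiset.mem_map.1 hP.2
      rw [Finset.mem_val, Finset.mem_Icc] at hj
      constructor
      · intro h0
        have := congrFun h0 ⟨0, by omega⟩
        norm_num at this
      · simp only [ne_eq, Nat.cast_eq_zero]
        omega
    · intro x hx hx0
      have hs1 : 1 ≤ ∑ i, x i := by
        rcases Nat.eq_zero_or_pos (∑ i, x i) with h | h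
        · exfalso; apply hx0; funext i
          exact Finset.sum_eq_zero_iff.1 h i (Finset.mem_univ i)
        · exact h
      rw [Multiset.countP_nsmul, Multiset.countP_map]
      have : Multiset.card (Multiset.filter
          (fun j : ℕ => IsOnHyperplane ((fun _ => (1:ℝ)), (j:ℝ)) (fun i => (x i : ℝ)))
          (Finset.Icc 1 (n-1)).val) = 1 := by
        rw [← Finset.filter_val, ← Finset.card_def]
        have : Finset.filter
            (fun j : ℕ => IsOnHyperplane ((fun _ => (1:ℝ)), (j:ℝ)) (fun i => (x i : ℝ)))
            (Finset.Icc 1 (n-1)) = {∑ i, x i} := by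
          ext j
          simp only [Finset.mem_filter, Finset.mem_Icc, Function.comp,
            IsOnHyperplane, one_mul, Finset.mem_singleton]
          constructor
          · rintro ⟨⟨h1, h2⟩, h3⟩
            have : ((∑ i, x i : ℕ) : ℝ) = (j : ℝ) := by push_cast at h3 ⊢; exact h3
            exact_mod_cast this.symm
          · rintro rfl
            refine ⟨⟨hs1, hx⟩, ?_⟩
            push_cast
            rfl
        rw [this, Finset.card_singleton]
      rw [this, mul_one]
    · rw [Multiset.card_nsmul, Multiset.card_map, ← Finset.card_def, Nat.card_Icc]
      have : n - 1 + 1 - 1 = n - 1 := by omega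
      rw [this, mul_comm]
  · -- lower bound
    rintro N ⟨M, hM0, hMcov, rfl⟩
    set i0 : Fin d := ⟨0, by omega⟩
    have key : ∀ t ∈ Finset.Icc 1 (n-1),
        k ≤ M.countP (fun P => IsOnHyperplane P (fun i => ((if i = i0 then t else 0 : ℕ) : ℝ))) := by
      intro t ht
      rw [Finset.mem_Icc] at ht
      apply hMcov
      · rw [Finset.sum_ite_eq' Finset.univ i0]
        simpa using ht.2
      · intro h0
        have := congrFun h0 i0
        simp at this
        omega
    calc (n - 1) * k = ∑ t ∈ Finset.Icc 1 (n-1), k := by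
          have e : n - 1 + 1 - 1 = n - 1 := by omega
          rw [Finset.sum_const, Nat.card_Icc, e, smul_eq_mul]
      _ ≤ ∑ t ∈ Finset.Icc 1 (n-1), M.countP
            (fun P => IsOnHyperplane P (fun i => ((if i = i0 then t else 0 : ℕ) : ℝ))) :=
          Finset.sum_le_sum key
      _ ≤ Multiset.card M := by
          apply sum_countP_le
          intro P hPM t ht t' ht' hp hp'
          rw [Finset.mem_Icc] at ht ht'
          obtain ⟨hP1, hP2⟩ := hM0 P hPM
          simp only [IsOnHyperplane] at hp hp'
          have e : ∀ s : ℕ, (∑ i, P.1 i * ((if i = i0 then s else 0 : ℕ) : ℝ))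
              = P.1 i0 * s := by
            intro s
            rw [Finset.sum_eq_single i0]
            · simp
            · intro b _ hb; simp [hb]
            · simp
          rw [e] at hp hp'
          have hu : P.1 i0 ≠ 0 := by
            intro h0; rw [h0, zero_mul] at hp; exact hP2 hp.symm
          have : (t : ℝ) = (t' : ℝ) := mul_left_cancel₀ hu (hp.trans hp'.symm)
          exact_mod_cast this
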